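/- Let A ∈ ℝ^{n×n}. There exists a symmetric positive definite matrix S with S - A S Aᵀ ⪰ 0 if and only if there exist a symmetric positive definite matrix S and a matrix X ∈ ℝ^{n×n} such that [[S, AX],[XᵀAᵀ, X + Xᵀ - S]] ⪰ 0. -/

import Mathlib

open Matrix

/-- There is a symmetric `S ≻ 0` with `S - A S Aᵀ ⪰ 0` iff there are a
symmetric `S ≻ 0` and `X` with `[[S, AX],[XᵀAᵀ, X + Xᵀ - S]] ⪰ 0`. -/
theorem stmt7 {n : ℕ} (A : Matrix (Fin n) (Fin n) ℝ) :
    (∃ S : Matrix (Fin n) (Fin n) ℝ, S.IsSymm ∧ S.PosDef ∧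
        (S - A * S * Aᵀ).PosSemidef) ↔
      (∃ (S : Matrix (Fin n) (Fin n) ℝ) (X : Matrix (Fin n) (Fin n) ℝ),
        S.IsSymm ∧ S.PosDef ∧
        (fromBlocks S (A * X) (Xᵀ * Aᵀ) (X + Xᵀ - S)).PosSemidef) := by
  constructor
  · rintro ⟨S, hSym, hPD, hPSD⟩
    refine ⟨S, S, hSym, hPD, ?_⟩
    haveI := hPD.isUnit.invertible
    have hC : Sᵀ * Aᵀ = (A * S)ᴴ := by
      simp [conjTranspose_eq_transpose_of_trivial, transpose_mul]
    have hD : S + Sᵀ - S = S := by rw [hSym.eq]; abel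
    rw [hC, hD, PosDef.fromBlocks₂₂ _ _ hPD]
    have : S - A * S * S⁻¹ * (A * S)ᴴ = S - A * S * Aᵀ := by
      rw [Matrix.mul_inv_cancel_right_of_invertible,
        conjTranspose_eq_transpose_of_trivial, transpose_mul, hSym.eq,
        Matrix.mul_assoc]
    rwa [this]
  · rintro ⟨S, X, hSym, hPD, hPSD⟩
    haveI := hPD.isUnit.invertible
    have hdet : IsUnit S.det := (Matrix.isUnit_iff_isUnit_det S).mp hPD.isUnit
    have hCT : ∀ (M : Matrix (Fin n) (Fin n) ℝ), Mᴴ = Mᵀ := fun M =>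
      conjTranspose_eq_transpose_of_trivial M
    rw [show Xᵀ * Aᵀ = (A * X)ᴴ by simp [hCT, transpose_mul]] at hPSD
    have h1 : (X + Xᵀ - S - (A * X)ᴴ * S⁻¹ * (A * X)).PosSemidef :=
      (PosDef.fromBlocks₁₁ _ _ hPD).mp hPSD
    have hSinv : (S⁻¹).PosDef := hPD.inv
    have h2 : ((X - S)ᴴ * S⁻¹ * (X - S)).PosSemidef :=
      hSinv.posSemidef.conjTranspose_mul_mul_same (X - S)
    have h3 := h1.add h2
    have key : X + Xᵀ - S - (A * X)ᴴ * S⁻¹ * (A * X) +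
        (X - S)ᴴ * S⁻¹ * (X - S) = Xᵀ * (S⁻¹ - Aᵀ * S⁻¹ * A) * X := by
      simp only [hCT, transpose_sub, transpose_mul, hSym.eq, sub_mul, mul_sub,
        Matrix.mul_assoc, Matrix.nonsing_inv_mul _ hdet,
        Matrix.mul_nonsing_inv_cancel_left _ _ hdet, Matrix.mul_one]
      abel
    rw [key] at h3
    -- X is invertible
    have hXXt : (X + Xᵀ - S).PosSemidef := by
      have := (h1.add (hSinv.posSemidef.conjTranspose_mul_mul_same (A * X)))
      simpa using this
    have hXpos : (X + Xᵀ).PosDef := by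
      have := Matrix.PosDef.posSemidef_add hXXt hPD
      simpa using this
    have hXunit : IsUnit X := by
      rw [← Matrix.mulVec_injective_iff_isUnit]
      intro u v huv
      by_contra hne
      have hXuv : X *ᵥ (u - v) = 0 := by
        rw [Matrix.mulVec_sub, huv, sub_self]
      have hpos := (posDef_iff_dotProduct_mulVec.mp hXpos).2 (x := u - v) (sub_ne_zero.mpr hne)
      rw [Matrix.add_mulVec, hXuv, zero_add, dotProduct_mulVec, star_trivial,
        Matrix.vecMul_transpose, hXuv] at hpos
      simp at hpos
    haveI := hXunit.invertible
    have hXdet : IsUnit X.det := (Matrix.isUnit_iff_isUnit_det X).mp hXunit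
    have h4 : (S⁻¹ - Aᵀ * S⁻¹ * A).PosSemidef := by
      have := h3.mul_mul_conjTranspose_same (Xᵀ)⁻¹
      simp only [hCT, Matrix.transpose_nonsing_inv, Matrix.transpose_transpose] at this
      rwa [show (Xᵀ)⁻¹ * (Xᵀ * (S⁻¹ - Aᵀ * S⁻¹ * A) * X) * X⁻¹ =
          (Xᵀ)⁻¹ * Xᵀ * ((S⁻¹ - Aᵀ * S⁻¹ * A) * (X * X⁻¹)) by noncomm_ring,
        Matrix.nonsing_inv_mul _ (by rwa [Matrix.det_transpose] : IsUnit Xᵀ.det),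
        Matrix.mul_nonsing_inv _ hXdet, Matrix.one_mul, Matrix.mul_one] at this
    have h5 : (S - S * Aᵀ * S⁻¹ * (A * S)).PosSemidef := by
      have := h4.mul_mul_conjTranspose_same S
      simp only [hCT, hSym.eq] at this
      rwa [Matrix.mul_sub, Matrix.sub_mul,
        show S * S⁻¹ * S = S by rw [Matrix.mul_nonsing_inv _ hdet, Matrix.one_mul],
        show S * (Aᵀ * S⁻¹ * A) * S = S * Aᵀ * S⁻¹ * (A * S) by noncomm_ring] at this
    -- Schur both ways on [[S, SAᵀ],[AS, S]]
    refine ⟨S, hSym, hPD, ?_⟩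
    have hblk : (fromBlocks S (S * Aᵀ) (S * Aᵀ)ᴴ S).PosSemidef := by
      rw [PosDef.fromBlocks₂₂ _ _ hPD]
      rwa [hCT, transpose_mul, transpose_transpose, hSym.eq]
    have := (PosDef.fromBlocks₁₁ (S * Aᵀ) S hPD).mp hblk
    rwa [hCT, transpose_mul, transpose_transpose, hSym.eq,
      show A * S * S⁻¹ * (S * Aᵀ) = A * S * Aᵀ by
        rw [Matrix.mul_inv_cancel_right_of_invertible, Matrix.mul_assoc]] at this
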